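/- For every integer t, each row of the matrix M_{k,t} contains exactly one nonzero entry, and each column of M_{k,t} contains exactly one nonzero entry. -/
import Mathlib


/-- each row and each column of the matrix
`M_{k,t}(r,s) = Σ_i (γ^t·α_i)^{(r-1)+(s-1)q}` contains exactly one nonzero entry. -/
theorem stmt9 {F : Type} [Field F] [Fintype F]
    (q p m : ℕ) (hp : p.Prime) (hodd : Odd p) (hm : 0 < m) (hq : q = p ^ m)
    (hcard : Fintype.card F = q ^ 2)
    (γ : Fˣ) (hγ : ∀ x : Fˣ, x ∈ Subgroup.zpowers γ)
    (k : ℕ) (hk2 : 2 ≤ k) (hkdvd : k ∣ q ^ 2 - 1)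
    (α : Fin k → F)
    (hα : ∀ i : Fin k, α i = (γ : F) ^ ((q ^ 2 - 1) / k * ((i : ℕ) + 1)))
    (t : ℤ) (M : Matrix (Fin k) (Fin k) F)
    (hM : ∀ r s : Fin k,
      M r s = ∑ i : Fin k, (((γ ^ t : Fˣ) : F) * α i) ^ ((r : ℕ) + (s : ℕ) * q)) :
    (∀ r : Fin k, ∃! s : Fin k, M r s ≠ 0) ∧ (∀ s : Fin k, ∃! r : Fin k, M r s ≠ 0) := by
  classical
  have hk0 : 0 < k := by omega
  haveI : NeZero k := ⟨by omega⟩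
  have hp2 : 2 ≤ p := hp.two_le
  have hq2 : 2 ≤ q := by
    subst hq
    calc 2 ≤ p := hp2
    _ ≤ p ^ m := Nat.le_self_pow (by omega) p
  have hq21 : 1 ≤ q ^ 2 := by nlinarith
  -- (k : F) ≠ 0
  have hkF : (k : F) ≠ 0 := by
    intro h
    have hch : ringChar F ∣ k := (ringChar.spec F k).mp h
    have hcardz : ((Fintype.card F : ℕ) : F) = 0 := FiniteField.cast_card_eq_zero F
    have hch2 : ringChar F ∣ q ^ 2 := by
      rw [← hcard]; exact (ringChar.spec F _).mp hcardz
    have hch1 : ringChar F ∣ q ^ 2 - 1 := hch.trans hkdvd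
    have : ringChar F ∣ 1 := by
      have := Nat.dvd_sub hch2 hch1
      rwa [Nat.sub_sub_self hq21] at this
    have hprime : (ringChar F).Prime := CharP.char_is_prime F (ringChar F)
    exact hprime.one_lt.ne' (Nat.eq_one_of_dvd_one this)
  -- order of γ
  have hcardu : Fintype.card Fˣ = q ^ 2 - 1 := by
    rw [Fintype.card_units, hcard]
  have hordγ : orderOf γ = q ^ 2 - 1 := by
    rw [orderOf_eq_card_of_forall_mem_zpowers hγ, Nat.card_eq_fintype_card, hcardu]
  set d : ℕ := (q ^ 2 - 1) / k with hd
  set ζ : Fˣ := γ ^ d with hζ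
  have hq24 : 4 ≤ q ^ 2 := by nlinarith
  have hordζ : orderOf ζ = k := by
    rw [hζ, hd, ← hordγ]
    exact orderOf_pow_orderOf_div (by rw [hordγ]; omega) (by rwa [hordγ])
  have hζpow : ∀ n : ℕ, ((ζ : F) ^ n = 1 ↔ k ∣ n) := by
    intro n
    rw [← Units.val_pow_eq_pow_val, ← hordζ]
    constructor
    · intro h
      exact orderOf_dvd_of_pow_eq_one (Units.ext h)
    · intro h
      rw [orderOf_dvd_iff_pow_eq_one.mp h, Units.val_one]
  have hζk : (ζ : F) ^ k = 1 := (hζpow k).mpr dvd_rfl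
  -- the root-of-unity power sum
  have hsum : ∀ n : ℕ, (∑ i : Fin k, α i ^ n) = if k ∣ n then (k : F) else 0 := by
    intro n
    have hαpow : ∀ i : Fin k, α i ^ n = ((ζ : F) ^ n) ^ ((i : ℕ) + 1) := by
      intro i
      have h2 : ((ζ : F) ^ n) ^ ((i : ℕ) + 1) = (γ : F) ^ (d * n * ((i : ℕ) + 1)) := by
        rw [hζ, Units.val_pow_eq_pow_val, ← pow_mul, ← pow_mul]
        congr 1
        ring
      rw [hα i, ← pow_mul, h2]
      congr 1
      ring
    rw [Finset.sum_congr rfl fun i _ => hαpow i]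
    set w : F := (ζ : F) ^ n with hw
    have hsum2 : (∑ i : Fin k, w ^ ((i : ℕ) + 1)) = ∑ i ∈ Finset.range k, w ^ (i + 1) :=
      Fin.sum_univ_eq_sum_range (fun i => w ^ (i + 1)) k
    rw [hsum2]
    by_cases hdvd : k ∣ n
    · rw [if_pos hdvd]
      have hw1 : w = 1 := (hζpow n).mpr hdvd
      simp [hw1]
    · rw [if_neg hdvd]
      have hw1 : w ≠ 1 := fun h => hdvd ((hζpow n).mp h)
      have hwk : w ^ k = 1 := by
        rw [hw, ← pow_mul, mul_comm, pow_mul, hζk, one_pow]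
      have hgeom : (∑ i ∈ Finset.range k, w ^ i) = 0 := by
        rw [geom_sum_eq hw1, hwk, sub_self, zero_div]
      calc (∑ i ∈ Finset.range k, w ^ (i + 1))
          = ∑ i ∈ Finset.range k, w * w ^ i := by
            refine Finset.sum_congr rfl fun i _ => ?_
            rw [pow_succ, mul_comm]
        _ = w * ∑ i ∈ Finset.range k, w ^ i := by rw [Finset.mul_sum]
        _ = 0 := by rw [hgeom, mul_zero]
  -- nonvanishing criterion
  have hMne : ∀ r s : Fin k, (M r s ≠ 0 ↔ k ∣ (r : ℕ) + (s : ℕ) * q) := by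
    intro r s
    set c : F := ((γ ^ t : Fˣ) : F) with hc
    set n : ℕ := (r : ℕ) + (s : ℕ) * q with hn
    have hcne : c ≠ 0 := Units.ne_zero _
    have hM2 : M r s = c ^ n * (if k ∣ n then (k : F) else 0) := by
      rw [hM r s, ← hsum n, Finset.mul_sum]
      exact Finset.sum_congr rfl fun i _ => by rw [mul_pow]
    by_cases hdvd : k ∣ n
    · simp only [hM2, if_pos hdvd]
      constructor
      · intro _; exact hdvd
      · intro _; exact mul_ne_zero (pow_ne_zero n hcne) hkF
    · simp only [hM2, if_neg hdvd, mul_zero]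
      constructor
      · intro h; exact absurd rfl h
      · intro h; exact absurd h hdvd
  -- arithmetic in ZMod k
  have hq2z : ((q : ZMod k) * q) = 1 := by
    have h0 : ((q ^ 2 - 1 : ℕ) : ZMod k) = 0 :=
      (ZMod.natCast_eq_zero_iff _ _).mpr hkdvd
    have h1 : ((q ^ 2 : ℕ) : ZMod k) = 1 := by
      have : q ^ 2 = (q ^ 2 - 1) + 1 := by omega
      rw [this, Nat.cast_add, h0, Nat.cast_one, zero_add]
    rw [← h1]; push_cast; ring
  have hinj : ∀ a b : Fin k, ((a : ℕ) : ZMod k) = ((b : ℕ) : ZMod k) → a = b := by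
    intro a b h
    apply Fin.ext
    rw [← ZMod.val_cast_of_lt a.isLt, ← ZMod.val_cast_of_lt b.isLt, h]
  have hdvd_iff : ∀ r s : Fin k,
      (k ∣ (r : ℕ) + (s : ℕ) * q ↔ ((r : ℕ) : ZMod k) + ((s : ℕ) : ZMod k) * q = 0) := by
    intro r s
    rw [← ZMod.natCast_eq_zero_iff]
    push_cast
    rfl
  constructor
  · intro r
    set s0 : ZMod k := -((r : ℕ) : ZMod k) * q with hs0
    refine ⟨⟨s0.val, ZMod.val_lt s0⟩, ?_, ?_⟩
    · show M r ⟨s0.val, ZMod.val_lt s0⟩ ≠ 0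
      rw [hMne, hdvd_iff]
      show ((r : ℕ) : ZMod k) + ((s0.val : ℕ) : ZMod k) * q = 0
      rw [ZMod.natCast_val, ZMod.cast_id, hs0]
      calc ((r : ℕ) : ZMod k) + -((r : ℕ) : ZMod k) * q * q
          = ((r : ℕ) : ZMod k) + -((r : ℕ) : ZMod k) * (q * q) := by ring
        _ = 0 := by rw [hq2z]; ring
    · intro s hs
      rw [hMne, hdvd_iff] at hs
      apply hinj
      show ((s : ℕ) : ZMod k) = ((s0.val : ℕ) : ZMod k)
      rw [ZMod.natCast_val, ZMod.cast_id, hs0]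
      have : (((s : ℕ) : ZMod k) * q) * q = (-((r : ℕ) : ZMod k)) * q := by
        rw [← eq_neg_of_add_eq_zero_right hs]
      calc ((s : ℕ) : ZMod k) = ((s : ℕ) : ZMod k) * (q * q) := by rw [hq2z, mul_one]
        _ = (((s : ℕ) : ZMod k) * q) * q := by ring
        _ = -((r : ℕ) : ZMod k) * q := this
  · intro s
    set r0 : ZMod k := -(((s : ℕ) : ZMod k) * q) with hr0
    refine ⟨⟨r0.val, ZMod.val_lt r0⟩, ?_, ?_⟩
    · show M ⟨r0.val, ZMod.val_lt r0⟩ s ≠ 0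
      rw [hMne, hdvd_iff]
      show ((r0.val : ℕ) : ZMod k) + ((s : ℕ) : ZMod k) * q = 0
      rw [ZMod.natCast_val, ZMod.cast_id, hr0]
      ring
    · intro r hr
      rw [hMne, hdvd_iff] at hr
      apply hinj
      show ((r : ℕ) : ZMod k) = ((r0.val : ℕ) : ZMod k)
      rw [ZMod.natCast_val, ZMod.cast_id, hr0]
      linear_combination hr
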